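/- Suppose a tracial free Meixner state has recursion data B, C as in the second-order cumulant equation DᵢDⱼR = δᵢⱼ + Σₜ Bᵢⱼᵗ DₜR + Σ_{s,t} C_{ij}^{st} DₛR DₜR. Then Bᵢⱼᵗ is invariant under cyclic permutations of (j, i, t), and the quantity Σₜ Bᵢⱼᵗ B_{ct}^d + C_{ij}^{cd} is invariant under cyclic permutations of (j, i, c, d). -/
import Mathlib


/-- A non-commutative formal power series in `z₁,…,zₙ` over `ℝ`, given by its
coefficient function on words. -/
abbrev NCS (n : ℕ) := List (Fin n) → ℝ

/-- Product of non-commutative power series (convolution over splittings of the word). -/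
noncomputable def ncsMul {n : ℕ} (F G : NCS n) : NCS n := fun w =>
  ∑ k ∈ Finset.range (w.length + 1), F (w.take k) * G (w.drop k)

/-- Left partial derivative `Dᵢ`. -/
def ncsD {n : ℕ} (i : Fin n) (F : NCS n) : NCS n := fun w => F (i :: w)

/-- The series `zᵢ`. -/
def ncsZ {n : ℕ} (i : Fin n) : NCS n := fun w => if w = [i] then 1 else 0

/-- The series `1 + M`. -/
def onePlus {n : ℕ} (M : NCS n) : NCS n := fun w => (if w = [] then 1 else 0) + M w

/-- Auxiliary fuelled definition of composition `R(V₁(z),…,Vₙ(z))` of non-commutative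
power series, for tuples `V` with vanishing constant terms. -/
noncomputable def ncsCompAux {n : ℕ} (V : Fin n → NCS n) : ℕ → NCS n → NCS n
  | 0, R => fun w => if w = [] then R [] else 0
  | (fuel + 1), R => fun w =>
      if w = [] then R []
      else ∑ i : Fin n, ∑ k ∈ Finset.range w.length,
        V i (w.take (k + 1)) * ncsCompAux V fuel (fun v => R (i :: v)) (w.drop (k + 1))

/-- Composition `R(V₁(z),…,Vₙ(z))` of non-commutative power series. -/
noncomputable def ncsComp {n : ℕ} (R : NCS n) (V : Fin n → NCS n) : NCS n :=
  fun w => ncsCompAux V w.length R w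

/-- The tuple `w ↦ wᵢ(1 + M(w))`: the substitution appearing in the
moment–cumulant relation `R(w₁(1+M(w)),…,wₙ(1+M(w))) = M(w)`. -/
def zTimesOnePlus {n : ℕ} (M : NCS n) (i : Fin n) : NCS n := fun w =>
  match w with
  | [] => 0
  | (j :: t) => if j = i then (if t = [] then 1 else 0) + M t else 0

/-- for a tracial free Meixner state (so the free cumulants are invariant
under cyclic permutations of the word) whose cumulant generating function satisfies
`DᵢDⱼR = δᵢⱼ + Σₜ Bᵢⱼᵗ DₜR + Σ_{s,t} C_{ij}^{st} DₛR DₜR`, the coefficient `Bᵢⱼᵗ` is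
invariant under cyclic permutations of `(j,i,t)`, and `Σₜ Bᵢⱼᵗ B_{ct}^d + C_{ij}^{cd}`
is invariant under cyclic permutations of `(j,i,c,d)`. -/
theorem tracial_Meixner_coefficient_cyclic_symmetry (n : ℕ) (R : NCS n)
    (B : Fin n → Fin n → Fin n → ℝ) (C : Fin n → Fin n → Fin n → Fin n → ℝ)
    (hcyc : ∀ (i : Fin n) (u : List (Fin n)), R (u ++ [i]) = R (i :: u))
    (hR0 : R [] = 0) (hR1 : ∀ i : Fin n, R [i] = 0)
    (hR2 : ∀ i j : Fin n, R [i, j] = if i = j then 1 else 0)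
    (heq : ∀ (i j : Fin n) (w : List (Fin n)),
      R (j :: i :: w)
        = (if i = j ∧ w = [] then (1 : ℝ) else 0)
          + (∑ t : Fin n, B i j t * R (t :: w))
          + (∑ s : Fin n, ∑ t : Fin n,
              C i j s t * ncsMul (ncsD s R) (ncsD t R) w)) :
    (∀ i j t : Fin n, B i j t = B t i j)
    ∧ (∀ i j c d : Fin n,
        (∑ t : Fin n, B i j t * B c t d) + C i j c d
          = (∑ t : Fin n, B c i t * B d t j) + C c i d j) := by
  have key1 : ∀ i j t : Fin n, R [j, i, t] = B i j t := by
    intro i j t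
    have h := heq i j [t]
    simp [ncsMul, ncsD, Finset.sum_range_succ, hR1, hR2, mul_ite] at h
    exact h
  have key2 : ∀ i j c d : Fin n,
      R [j, i, c, d] = (∑ t : Fin n, B i j t * B c t d) + C i j c d := by
    intro i j c d
    have h := heq i j [c, d]
    have hs : ∀ t' : Fin n, R [t', c, d] = B c t' d := fun t' => key1 c t' d
    simp [ncsMul, ncsD, Finset.sum_range_succ, hR1, hR2, hs, mul_ite] at h
    exact h
  have rot3 : ∀ a b c : Fin n, R [a, b, c] = R [c, a, b] := by
    intro a b c
    have := hcyc c [a, b]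
    simpa using this
  have rot4 : ∀ a b c d : Fin n, R [a, b, c, d] = R [d, a, b, c] := by
    intro a b c d
    have := hcyc d [a, b, c]
    simpa using this
  constructor
  · intro i j t
    rw [← key1 i j t, ← key1 t i j, rot3, rot3]
  · intro i j c d
    rw [← key2 i j c d, ← key2 c i d j, rot4, rot4, rot4]
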